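/- Let X = ∏_{j=1}^m X_j be a finite product of measurable spaces (X_j, 𝒳_j), let 𝒳 = ⊗_j 𝒳_j be the product σ-algebra, and let 𝒳̃ = ⊗_j 𝒳̄_j be the product of the universal completions 𝒳̄_j. If μ and μ' are probability measures on (X, 𝒳̃) that agree on every set in 𝒳, then μ = μ'. -/

import Mathlib

open MeasureTheory

/-- The completion of a σ-algebra `m` with respect to a measure `μ`:
the σ-algebra of `μ`-null-measurable sets. -/
noncomputable def completionAlg {X : Type*} (m : MeasurableSpace X) (μ : @Measure X m) :
    MeasurableSpace X where
  MeasurableSet' s := @NullMeasurableSet X m s μ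
  measurableSet_empty := @MeasurableSet.nullMeasurableSet X m μ ∅ MeasurableSet.empty
  measurableSet_compl _ hs := @NullMeasurableSet.compl X m μ _ hs
  measurableSet_iUnion _ hs := @NullMeasurableSet.iUnion X m μ _ _ _ hs

/-- The universal completion of a σ-algebra: the intersection of its completions
with respect to all probability measures. -/
noncomputable def univCompletion {X : Type*} (m : MeasurableSpace X) : MeasurableSpace X :=
  ⨅ (μ : @Measure X m) (_ : @IsProbabilityMeasure X m μ), completionAlg m μ

lemma le_univCompletion {X : Type*} (m : MeasurableSpace X) : m ≤ univCompletion m :=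
  le_iInf fun ν => le_iInf fun _ => fun s hs => @MeasurableSet.nullMeasurableSet X m ν s hs

lemma symmDiff_pi_subset {ι : Type*} {X : ι → Type*} (A B : ∀ j, Set (X j)) :
    symmDiff (Set.pi Set.univ A) (Set.pi Set.univ B) ⊆
      ⋃ j, (fun x : ∀ j, X j => x j) ⁻¹' symmDiff (A j) (B j) := by
  intro x hx
  rcases hx with ⟨hA, hB⟩ | ⟨hB, hA⟩
  · simp only [Set.mem_pi, Set.mem_univ, forall_true_left] at hA hB
    push_neg at hB
    obtain ⟨j, hj⟩ := hB
    exact Set.mem_iUnion.2 ⟨j, Or.inl ⟨hA j, hj⟩⟩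
  · simp only [Set.mem_pi, Set.mem_univ, forall_true_left] at hA hB
    push_neg at hA
    obtain ⟨j, hj⟩ := hA
    exact Set.mem_iUnion.2 ⟨j, Or.inr ⟨hB j, hj⟩⟩

/-- If two probability measures on the product of the universal completions agree on every
set of the (uncompleted) product σ-algebra, they are equal. -/
theorem measures_eq_of_eq_on_product_algebra
    {m : ℕ} {X : Fin m → Type*} (mX : ∀ j, MeasurableSpace (X j))
    (μ μ' : @Measure (∀ j, X j) (@MeasurableSpace.pi _ _ (fun j => univCompletion (mX j))))
    (hμ : @IsProbabilityMeasure _ (@MeasurableSpace.pi _ _ (fun j => univCompletion (mX j))) μ)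
    (hμ' : @IsProbabilityMeasure _ (@MeasurableSpace.pi _ _ (fun j => univCompletion (mX j))) μ')
    (h : ∀ B : Set (∀ j, X j),
      MeasurableSet[@MeasurableSpace.pi _ _ mX] B → μ B = μ' B) :
    μ = μ' := by
  haveI := hμ; haveI := hμ'
  letI mXc : ∀ j, MeasurableSpace (X j) := fun j => univCompletion (mX j)
  letI mXp : MeasurableSpace (∀ j, X j) := MeasurableSpace.pi
  -- the projections are measurable to the base σ-algebras
  have hmeas : ∀ j, @Measurable (∀ j, X j) (X j) mXp (mX j) (fun x => x j) := fun j =>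
    (measurable_pi_apply j).mono le_rfl (le_univCompletion (mX j))
  -- the marginal of μ + μ' on coordinate j, normalized to a probability measure
  set ρ : @Measure (∀ j, X j) mXp := μ + μ' with hρ
  have hρuniv : ρ Set.univ = 2 := by
    simp [hρ, Measure.add_apply, measure_univ, one_add_one_eq_two]
  set ν : ∀ j, @Measure (X j) (mX j) :=
    fun j => (2⁻¹ : ENNReal) • @Measure.map _ _ mXp (mX j) (fun x => x j) ρ with hν
  have hνP : ∀ j, @IsProbabilityMeasure (X j) (mX j) (ν j) := by
    intro j
    constructor
    rw [hν]
    simp only [Measure.smul_apply, smul_eq_mul]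
    rw [@Measure.map_apply _ _ mXp (mX j) _ _ (hmeas j) _ MeasurableSet.univ]
    simp only [Set.preimage_univ, hρuniv]
    simp [ENNReal.inv_mul_cancel]
  -- key: μ and μ' agree on boxes with universally measurable sides
  refine ext_of_generate_finite
    (Set.pi Set.univ '' Set.pi Set.univ fun j => { s : Set (X j) | MeasurableSet[mXc j] s })
    generateFrom_pi.symm isPiSystem_pi ?_ ?_
  · rintro _ ⟨A, hA, rfl⟩
    simp only [Set.mem_pi, Set.mem_univ, forall_true_left, Set.mem_setOf_eq] at hA
    -- each A j is null-measurable for ν j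
    have hAnull : ∀ j, @NullMeasurableSet (X j) (mX j) (A j) (ν j) := by
      intro j
      exact (iInf_le_of_le (ν j) (iInf_le_of_le (hνP j) le_rfl) : univCompletion (mX j) ≤ _)
        _ (hA j)
    choose B hBmeas hBae using fun j => (hAnull j : ∃ t, MeasurableSet[mX j] t ∧
      (A j) =ᵐ[ν j] t)
    -- the symmetric difference is null for both μ and μ'
    have hnull : ∀ (κ : @Measure (∀ j, X j) mXp), κ ≤ ρ →
        κ (symmDiff (Set.pi Set.univ A) (Set.pi Set.univ B)) = 0 := by
      intro κ hκ
      refine measure_mono_null (symmDiff_pi_subset A B) (measure_iUnion_null fun j => ?_)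
      have h1 : ν j (symmDiff (A j) (B j)) = 0 :=
        measure_symmDiff_eq_zero_iff.2 (hBae j)
      have h2 : ρ ((fun x : ∀ j, X j => x j) ⁻¹' symmDiff (A j) (B j)) = 0 := by
        obtain ⟨t, hsub, htm, ht0⟩ :=
          @exists_measurable_superset_of_null (X j) (mX j) (ν j) _ h1
        have hmap : @Measure.map _ _ mXp (mX j) (fun x => x j) ρ t = 0 := by
          have : ν j t = 0 := ht0
          rw [hν] at this
          simp only [Measure.smul_apply, smul_eq_mul] at this
          exact (mul_eq_zero.1 this).resolve_left (by norm_num)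
        rw [@Measure.map_apply _ _ mXp (mX j) _ _ (hmeas j) _ htm] at hmap
        exact measure_mono_null (Set.preimage_mono hsub) hmap
      exact le_antisymm ((hκ _).trans_eq h2) zero_le
    have hμle : μ ≤ ρ := by rw [hρ]; exact Measure.le_add_right le_rfl
    have hμ'le : μ' ≤ ρ := by rw [hρ]; exact Measure.le_add_left le_rfl
    have e1 : μ (Set.pi Set.univ A) = μ (Set.pi Set.univ B) :=
      measure_congr (measure_symmDiff_eq_zero_iff.1 (hnull μ hμle))
    have e2 : μ' (Set.pi Set.univ A) = μ' (Set.pi Set.univ B) :=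
      measure_congr (measure_symmDiff_eq_zero_iff.1 (hnull μ' hμ'le))
    rw [e1, e2]
    exact h _ (@MeasurableSet.univ_pi _ _ mX _ _ fun j => hBmeas j)
  · simp [measure_univ]
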